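/- Let u ∈ H^3(S) and ρ ∈ H^2(S) be periodic with μ(u) = μ ∈ ℝ, and set m = u_{xx}. If u and ρ evolve by the μ-Hunter–Saxton system, then d/dt ∫_S m² dx = 3∫_S u_x m² dx − 2∫_S m ρ ρ_x dx; in particular, if u_x ≤ M₁ pointwise, then d/dt ∫_S m² dx ≤ (3M₁ + ‖ρ‖_{L^∞}) ∫_S m² dx + ‖ρ‖_{L^∞} ∫_S ρ_x² dx. -/

import Mathlib

open MeasureTheory intervalIntegral

set_option maxHeartbeats 1000000 in
/-- For a smooth periodic solution of the μ-Hunter–Saxton system with `μ(u) = μ` and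
`m = u_{xx}`: `d/dt ∫_S m² dx = 3∫_S u_x m² dx − 2∫_S m ρ ρ_x dx`; in particular, if
`u_x ≤ M₁` pointwise, then
`d/dt ∫_S m² dx ≤ (3M₁ + ‖ρ‖_∞) ∫_S m² dx + ‖ρ‖_∞ ∫_S ρ_x² dx`. -/
theorem m_energy_identity
    (γ₁ γ₂ μ M₁ : ℝ) (u ux uxx uxxx uxxt ρ ρt ρx : ℝ → ℝ → ℝ)
    (hcu : Continuous (Function.uncurry u))
    (hcux : Continuous (Function.uncurry ux))
    (hcuxx : Continuous (Function.uncurry uxx))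
    (hcuxxx : Continuous (Function.uncurry uxxx))
    (hcuxxt : Continuous (Function.uncurry uxxt))
    (hcρ : Continuous (Function.uncurry ρ))
    (hcρx : Continuous (Function.uncurry ρx))
    (hpu : ∀ t x : ℝ, u t (x + 1) = u t x)
    (hpρ : ∀ t x : ℝ, ρ t (x + 1) = ρ t x)
    (hux : ∀ t x : ℝ, HasDerivAt (fun y => u t y) (ux t x) x)
    (huxx : ∀ t x : ℝ, HasDerivAt (fun y => ux t y) (uxx t x) x)
    (huxxx : ∀ t x : ℝ, HasDerivAt (fun y => uxx t y) (uxxx t x) x)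
    (huxxt : ∀ t x : ℝ, HasDerivAt (fun s => uxx s x) (uxxt t x) t)
    (hρt : ∀ t x : ℝ, HasDerivAt (fun s => ρ s x) (ρt t x) t)
    (hρx : ∀ t x : ℝ, HasDerivAt (fun y => ρ t y) (ρx t x) x)
    (hμ : ∀ t : ℝ, (∫ x in (0:ℝ)..1, u t x) = μ)
    (hpde1 : ∀ t x : ℝ,
      -(uxxt t x) = 2 * μ * ux t x - 2 * ux t x * uxx t x - u t x * uxxx t x
        + ρ t x * ρx t x - γ₁ * uxxx t x)
    (hpde2 : ∀ t x : ℝ,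
      ρt t x = ρx t x * u t x + ρ t x * ux t x + 2 * γ₂ * ρx t x) :
    ∀ t : ℝ,
      HasDerivAt (fun s => ∫ x in (0:ℝ)..1, (uxx s x) ^ 2)
        (3 * (∫ x in (0:ℝ)..1, ux t x * (uxx t x) ^ 2)
          - 2 * ∫ x in (0:ℝ)..1, uxx t x * ρ t x * ρx t x) t ∧
      ((∀ x : ℝ, ux t x ≤ M₁) →
        3 * (∫ x in (0:ℝ)..1, ux t x * (uxx t x) ^ 2)
            - 2 * (∫ x in (0:ℝ)..1, uxx t x * ρ t x * ρx t x)
          ≤ (3 * M₁ + ⨆ x : ℝ, |ρ t x|) * (∫ x in (0:ℝ)..1, (uxx t x) ^ 2)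
            + (⨆ x : ℝ, |ρ t x|) * ∫ x in (0:ℝ)..1, (ρx t x) ^ 2) := by
  intro t
  -- continuity of slices in x
  have cu : Continuous fun x => u t x := hcu.comp (Continuous.prodMk_right t)
  have cux : Continuous fun x => ux t x := hcux.comp (Continuous.prodMk_right t)
  have cuxx : Continuous fun x => uxx t x := hcuxx.comp (Continuous.prodMk_right t)
  have cuxxx : Continuous fun x => uxxx t x := hcuxxx.comp (Continuous.prodMk_right t)
  have cuxxt : Continuous fun x => uxxt t x := hcuxxt.comp (Continuous.prodMk_right t)
  have cρ : Continuous fun x => ρ t x := hcρ.comp (Continuous.prodMk_right t)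
  have cρx : Continuous fun x => ρx t x := hcρx.comp (Continuous.prodMk_right t)
  -- periodicity of ux and uxx
  have hpux : ∀ x, ux t (x + 1) = ux t x := by
    intro x
    have heq : (fun y => u t (y + 1)) = fun y => u t y := funext fun y => hpu t y
    have h1 : HasDerivAt (fun y => u t (y + 1)) (ux t (x + 1)) x := by
      simpa [Function.comp_def] using (hux t (x + 1)).comp x ((hasDerivAt_id x).add_const 1)
    have h2 : HasDerivAt (fun y => u t (y + 1)) (ux t x) x := by
      rw [heq]; exact hux t x
    exact h1.unique h2
  have hpuxx : ∀ x, uxx t (x + 1) = uxx t x := by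
    intro x
    have heq : (fun y => ux t (y + 1)) = fun y => ux t y := funext fun y => hpux y
    have h1 : HasDerivAt (fun y => ux t (y + 1)) (uxx t (x + 1)) x := by
      simpa [Function.comp_def] using (huxx t (x + 1)).comp x ((hasDerivAt_id x).add_const 1)
    have h2 : HasDerivAt (fun y => ux t (y + 1)) (uxx t x) x := by
      rw [heq]; exact huxx t x
    exact h1.unique h2
  -- differentiation under the integral sign
  have hcF' : Continuous (fun p : ℝ × ℝ => 2 * uxx p.1 p.2 * uxxt p.1 p.2) := by
    have : Continuous fun p : ℝ × ℝ => uxx p.1 p.2 := by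
      exact hcuxx
    have h2 : Continuous fun p : ℝ × ℝ => uxxt p.1 p.2 := by
      exact hcuxxt
    exact ((continuous_const.mul this).mul h2)
  obtain ⟨p₀, hp₀mem, hC⟩ :=
    ((isCompact_Icc (a := t - 1) (b := t + 1)).prod (isCompact_Icc (a := (0:ℝ)) (b := 1))).exists_isMaxOn
      ⟨(t, 0), by constructor <;> constructor <;> simp <;> linarith⟩
      hcF'.norm.continuousOn
  set C : ℝ := ‖2 * uxx p₀.1 p₀.2 * uxxt p₀.1 p₀.2‖ with hCdef
  have key :=
    intervalIntegral.hasDerivAt_integral_of_dominated_loc_of_deriv_le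
      (F := fun s x => (uxx s x) ^ 2) (F' := fun s x => 2 * uxx s x * uxxt s x)
      (x₀ := t) (a := (0:ℝ)) (b := 1) (bound := fun _ => C) (μ := volume)
      (Metric.ball_mem_nhds t one_pos)
      (Filter.Eventually.of_forall fun s =>
        ((hcuxx.comp (Continuous.prodMk_right s)).pow 2).aestronglyMeasurable)
      ((cuxx.pow 2).intervalIntegrable 0 1)
      ((continuous_const.mul cuxx |>.mul cuxxt).aestronglyMeasurable)
      (Filter.Eventually.of_forall (fun x hx s hs => by
        have hx' : x ∈ Set.Icc (0:ℝ) 1 := by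
          rcases hx with ⟨h1, h2⟩
          constructor
          · simp at h1 ⊢; linarith [h1]
          · simp at h2 ⊢; linarith [h2]
        have hs' : s ∈ Set.Icc (t - 1) (t + 1) := by
          have := Metric.mem_ball.mp hs
          rw [Real.dist_eq] at this
          constructor <;> [linarith [neg_abs_le (s - t)]; linarith [le_abs_self (s - t)]]
        exact hC (show (s, x) ∈ Set.Icc (t-1) (t+1) ×ˢ Set.Icc (0:ℝ) 1 from ⟨hs', hx'⟩)))
      (intervalIntegrable_const)
      (Filter.Eventually.of_forall (fun x hx s hs => by
        simpa [mul_assoc, Pi.pow_def] using (huxxt s x).pow 2))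
  -- integration by parts: rewrite the time-derivative integrand
  set G : ℝ → ℝ := fun y => -(2 * μ) * (ux t y) ^ 2 + u t y * (uxx t y) ^ 2 + γ₁ * (uxx t y) ^ 2
    with hGdef
  set g : ℝ → ℝ := fun y =>
    -(2 * μ) * (2 * ux t y * uxx t y)
      + (ux t y * (uxx t y) ^ 2 + u t y * (2 * uxx t y * uxxx t y))
      + γ₁ * (2 * uxx t y * uxxx t y) with hgdef
  have hG : ∀ y, HasDerivAt G (g y) y := by
    intro y
    have hu2 : HasDerivAt (fun z => (ux t z) ^ 2) (2 * ux t y * uxx t y) y := by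
      simpa [mul_assoc, Pi.pow_def] using (huxx t y).pow 2
    have hm2 : HasDerivAt (fun z => (uxx t z) ^ 2) (2 * uxx t y * uxxx t y) y := by
      simpa [mul_assoc, Pi.pow_def] using (huxxx t y).pow 2
    exact ((hu2.const_mul (-(2 * μ))).add ((hux t y).mul hm2)).add (hm2.const_mul γ₁)
  have cg : Continuous g := by
    have c1 : Continuous fun y => 2 * ux t y * uxx t y :=
      (continuous_const.mul cux).mul cuxx
    have c2 : Continuous fun y => 2 * uxx t y * uxxx t y :=
      (continuous_const.mul cuxx).mul cuxxx
    exact ((continuous_const.mul c1).add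
      ((cux.mul (cuxx.pow 2)).add (cu.mul c2))).add (continuous_const.mul c2)
  have hintg : (∫ x in (0:ℝ)..1, g x) = 0 := by
    rw [intervalIntegral.integral_eq_sub_of_hasDerivAt
      (fun y _ => hG y) (cg.intervalIntegrable 0 1)]
    have h1 : u t 1 = u t 0 := by simpa using hpu t 0
    have h2 : ux t 1 = ux t 0 := by simpa using hpux 0
    have h3 : uxx t 1 = uxx t 0 := by simpa using hpuxx 0
    simp [hGdef, h1, h2, h3]
  have hpoint : ∀ x, 2 * uxx t x * uxxt t x
      = 3 * (ux t x * (uxx t x) ^ 2) - 2 * (uxx t x * ρ t x * ρx t x) + g x := by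
    intro x
    have hp := hpde1 t x
    have huxxt' : uxxt t x = -(2 * μ * ux t x - 2 * ux t x * uxx t x - u t x * uxxx t x
        + ρ t x * ρx t x - γ₁ * uxxx t x) := by linarith
    rw [huxxt']
    simp only [hgdef]
    ring
  have hi1 : IntervalIntegrable (fun x => ux t x * (uxx t x) ^ 2) volume 0 1 :=
    (cux.mul (cuxx.pow 2)).intervalIntegrable 0 1
  have hi2 : IntervalIntegrable (fun x => uxx t x * ρ t x * ρx t x) volume 0 1 :=
    ((cuxx.mul cρ).mul cρx).intervalIntegrable 0 1
  have hint : (∫ x in (0:ℝ)..1, 2 * uxx t x * uxxt t x)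
      = 3 * (∫ x in (0:ℝ)..1, ux t x * (uxx t x) ^ 2)
        - 2 * ∫ x in (0:ℝ)..1, uxx t x * ρ t x * ρx t x := by
    rw [intervalIntegral.integral_congr (g := fun x =>
      (3 * (ux t x * (uxx t x) ^ 2) - 2 * (uxx t x * ρ t x * ρx t x)) + g x)
      (fun x _ => hpoint x)]
    rw [intervalIntegral.integral_add
      (((hi1.const_mul 3).sub (hi2.const_mul 2)))
      (cg.intervalIntegrable 0 1), hintg,
      intervalIntegral.integral_sub (hi1.const_mul 3) (hi2.const_mul 2),
      intervalIntegral.integral_const_mul, intervalIntegral.integral_const_mul]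
    ring
  have hderiv := key.2
  rw [hint] at hderiv
  refine ⟨hderiv, fun hM => ?_⟩
  -- the inequality part
  set S : ℝ := ⨆ x : ℝ, |ρ t x| with hSdef
  have hper : Function.Periodic (fun x => |ρ t x|) 1 := fun x => by simp [hpρ t x]
  obtain ⟨x₀, _, hx₀⟩ := (isCompact_Icc (a := (0:ℝ)) (b := 1)).exists_isMaxOn
    ⟨0, by norm_num⟩ cρ.abs.continuousOn
  have hbdd : BddAbove (Set.range fun x => |ρ t x|) := by
    refine ⟨|ρ t x₀|, ?_⟩
    rintro y ⟨x, rfl⟩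
    obtain ⟨z, hz, hfz⟩ := hper.exists_mem_Ico₀ one_pos x
    exact le_trans (le_of_eq hfz) (hx₀ ⟨hz.1, hz.2.le⟩)
  have hle : ∀ x, |ρ t x| ≤ S := fun x => le_ciSup hbdd x
  have hS0 : 0 ≤ S := le_trans (abs_nonneg _) (hle 0)
  have him2 : IntervalIntegrable (fun x => (uxx t x) ^ 2) volume 0 1 :=
    (cuxx.pow 2).intervalIntegrable 0 1
  have hiρx2 : IntervalIntegrable (fun x => (ρx t x) ^ 2) volume 0 1 :=
    (cρx.pow 2).intervalIntegrable 0 1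
  -- first term bound
  have hA : (∫ x in (0:ℝ)..1, ux t x * (uxx t x) ^ 2)
      ≤ M₁ * ∫ x in (0:ℝ)..1, (uxx t x) ^ 2 := by
    rw [← intervalIntegral.integral_const_mul]
    exact intervalIntegral.integral_mono_on (by norm_num) hi1 (him2.const_mul M₁)
      (fun x _ => mul_le_mul_of_nonneg_right (hM x) (sq_nonneg _))
  -- second term bound
  have hB : -2 * (∫ x in (0:ℝ)..1, uxx t x * ρ t x * ρx t x)
      ≤ S * ((∫ x in (0:ℝ)..1, (uxx t x) ^ 2) + ∫ x in (0:ℝ)..1, (ρx t x) ^ 2) := by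
    calc (-2) * (∫ x in (0:ℝ)..1, uxx t x * ρ t x * ρx t x)
        = ∫ x in (0:ℝ)..1, (-2) * (uxx t x * ρ t x * ρx t x) :=
          (intervalIntegral.integral_const_mul _ _).symm
      _ ≤ ∫ x in (0:ℝ)..1, S * ((uxx t x) ^ 2 + (ρx t x) ^ 2) := by
          refine intervalIntegral.integral_mono_on (by norm_num) (hi2.const_mul (-2))
            (((him2.add hiρx2).const_mul S)) (fun x _ => ?_)
          have e : |(-2) * (uxx t x * ρ t x * ρx t x)|
              = |ρ t x| * (2 * |uxx t x| * |ρx t x|) := by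
            rw [abs_mul, abs_mul, abs_mul]
            rw [show |(-2 : ℝ)| = 2 by norm_num]
            ring
          have h2 : 2 * |uxx t x| * |ρx t x| ≤ (uxx t x) ^ 2 + (ρx t x) ^ 2 := by
            nlinarith [sq_nonneg (|uxx t x| - |ρx t x|), sq_abs (uxx t x), sq_abs (ρx t x)]
          have h3 : 0 ≤ 2 * |uxx t x| * |ρx t x| := by positivity
          calc (-2) * (uxx t x * ρ t x * ρx t x)
              ≤ |(-2) * (uxx t x * ρ t x * ρx t x)| := le_abs_self _
            _ = |ρ t x| * (2 * |uxx t x| * |ρx t x|) := e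
            _ ≤ S * ((uxx t x) ^ 2 + (ρx t x) ^ 2) :=
                mul_le_mul (hle x) h2 h3 hS0
      _ = S * ∫ x in (0:ℝ)..1, ((uxx t x) ^ 2 + (ρx t x) ^ 2) :=
          intervalIntegral.integral_const_mul _ _
      _ = S * ((∫ x in (0:ℝ)..1, (uxx t x) ^ 2) + ∫ x in (0:ℝ)..1, (ρx t x) ^ 2) := by
          rw [intervalIntegral.integral_add him2 hiρx2]
  have hfin : (3 * M₁ + S) * (∫ x in (0:ℝ)..1, (uxx t x) ^ 2)
      + S * (∫ x in (0:ℝ)..1, (ρx t x) ^ 2)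
      = 3 * (M₁ * ∫ x in (0:ℝ)..1, (uxx t x) ^ 2)
        + S * ((∫ x in (0:ℝ)..1, (uxx t x) ^ 2) + ∫ x in (0:ℝ)..1, (ρx t x) ^ 2) := by
    ring
  rw [hSdef] at hB hfin ⊢
  linarith
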